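/- Fix k ≥ 2. Let u = (u_1, …, u_k), with each u_i ∈ ℝ^N, be dual feasible for the MOT program and satisfy Σ_{i=1}^k u_i = 0 (as vectors in ℝ^N) and u_i(1) = 0 for every i = 1,…,k. Then for each i = 1,…,k and each j = 1,…,N, |u_i(j)| ≤ ((k−1)/k²)·‖x_1 − x_j‖². Consequently, ‖u_i‖₂ ≤ ((k−1)/k²)·C(X) for every i, where C(X) := (Σ_{j=1}^N ‖x_1 − x_j‖⁴)^{1/2} depends only on X. -/

import Mathlib

open scoped BigOperators

/-- The variance cost of the tuple `(x_{t 1}, …, x_{t k})`. -/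
noncomputable def motCost {d k N : ℕ} (x : Fin N → EuclideanSpace ℝ (Fin d))
    (t : Fin k → Fin N) : ℝ :=
  (k : ℝ)⁻¹ * ∑ i, ‖x (t i) - (k : ℝ)⁻¹ • ∑ m, x (t m)‖ ^ 2

/-- Dual feasibility for the MOT program: for every tuple `(j_1,…,j_k)`,
`∑ i u_i(j_i) ≤ c(j_1,…,j_k)`. -/
def DualFeasible {d k N : ℕ} (x : Fin N → EuclideanSpace ℝ (Fin d))
    (u : Fin k → Fin N → ℝ) : Prop :=
  ∀ t : Fin k → Fin N, ∑ i, u i (t i) ≤ motCost x t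

lemma motCost_update {d k N : ℕ} (hk : 0 < k) (x : Fin N → EuclideanSpace ℝ (Fin d))
    (i0 : Fin k) (a b : Fin N) :
    motCost x (Function.update (fun _ => a) i0 b) =
      ((k:ℝ) - 1) / (k:ℝ)^2 * ‖x a - x b‖^2 := by
  have hk0 : (k:ℝ) ≠ 0 := Nat.cast_ne_zero.mpr hk.ne'
  set v := x b - x a with hv
  set t := Function.update (fun _ : Fin k => a) i0 b with ht
  have hcard : (Finset.univ.erase i0).card = k - 1 := by
    simp [Finset.card_erase_of_mem]
  have ht0 : t i0 = b := by simp [ht]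
  have htne : ∀ m, m ≠ i0 → t m = a := by
    intro m hm; simp [ht, Function.update_of_ne hm]
  have hS : ∑ m, x (t m) = (k:ℝ) • x a + v := by
    rw [← Finset.add_sum_erase _ _ (Finset.mem_univ i0), ht0]
    have : ∑ m ∈ Finset.univ.erase i0, x (t m) = (k - 1 : ℕ) • x a := by
      rw [← hcard, ← Finset.sum_const]
      exact Finset.sum_congr rfl fun m hm => by
        rw [htne m (Finset.ne_of_mem_erase hm)]
    rw [this, hv]
    have hk1 : ((k - 1 : ℕ) : ℝ) = (k : ℝ) - 1 := by
      have : 1 ≤ k := hk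
      push_cast [this]; ring
    rw [← Nat.cast_smul_eq_nsmul ℝ, hk1]
    module
  have hmean : (k:ℝ)⁻¹ • ∑ m, x (t m) = x a + (k:ℝ)⁻¹ • v := by
    rw [hS, smul_add, smul_smul, inv_mul_cancel₀ hk0, one_smul]
  have hterm : ∀ m : Fin k, ‖x (t m) - (k:ℝ)⁻¹ • ∑ m, x (t m)‖ ^ 2 =
      (if m = i0 then (1 - (k:ℝ)⁻¹)^2 else ((k:ℝ)⁻¹)^2) * ‖v‖^2 := by
    intro m
    by_cases h : m = i0
    · subst h
      rw [ht0, hmean, if_pos rfl]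
      have : x b - (x a + (k:ℝ)⁻¹ • v) = (1 - (k:ℝ)⁻¹) • v := by
        rw [hv]; module
      rw [this, norm_smul, mul_pow, Real.norm_eq_abs, sq_abs]
    · rw [htne m h, hmean, if_neg h]
      have : x a - (x a + (k:ℝ)⁻¹ • v) = (-(k:ℝ)⁻¹) • v := by module
      rw [this, norm_smul, mul_pow, Real.norm_eq_abs, abs_neg, sq_abs]
  have hnv : ‖x a - x b‖ = ‖v‖ := by rw [hv, norm_sub_rev]
  rw [motCost]
  simp only [hterm]
  rw [← Finset.add_sum_erase _ _ (Finset.mem_univ i0), if_pos rfl]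
  have hrest : ∑ m ∈ Finset.univ.erase i0,
      (if m = i0 then (1 - (k:ℝ)⁻¹)^2 else ((k:ℝ)⁻¹)^2) * ‖v‖^2
      = ((k:ℝ) - 1) * (((k:ℝ)⁻¹)^2 * ‖v‖^2) := by
    rw [Finset.sum_congr rfl (fun m hm => by
          rw [if_neg (Finset.ne_of_mem_erase hm)]),
        Finset.sum_const, hcard, nsmul_eq_mul]
    have hk1 : ((k - 1 : ℕ) : ℝ) = (k : ℝ) - 1 := by
      have h1 : 1 ≤ k := hk
      push_cast [h1]; ring
    rw [hk1]
  rw [hrest, hnv]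
  field_simp
  ring

theorem dual_variable_bounds {d k N : ℕ} (hk : 2 ≤ k) (hN : 0 < N)
    (x : Fin N → EuclideanSpace ℝ (Fin d)) (hx : Function.Injective x)
    (u : Fin k → Fin N → ℝ) (hu : DualFeasible x u)
    (hsum : ∀ j, ∑ i, u i j = 0)
    (hfirst : ∀ i, u i ⟨0, hN⟩ = 0) :
    (∀ (i : Fin k) (j : Fin N),
        |u i j| ≤ ((k : ℝ) - 1) / (k : ℝ) ^ 2 * ‖x ⟨0, hN⟩ - x j‖ ^ 2) ∧
    (∀ i : Fin k,
        Real.sqrt (∑ j, u i j ^ 2) ≤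
          ((k : ℝ) - 1) / (k : ℝ) ^ 2 *
            Real.sqrt (∑ j, ‖x ⟨0, hN⟩ - x j‖ ^ 4)) := by
  have hk0 : 0 < k := by omega
  set z : Fin N := ⟨0, hN⟩
  have key : ∀ (i : Fin k) (j : Fin N),
      |u i j| ≤ ((k : ℝ) - 1) / (k : ℝ) ^ 2 * ‖x z - x j‖ ^ 2 := by
    intro i j
    have hub : u i j ≤ ((k : ℝ) - 1) / (k : ℝ) ^ 2 * ‖x z - x j‖ ^ 2 := by
      have h := hu (Function.update (fun _ => z) i j)
      rw [motCost_update hk0] at h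
      calc u i j = ∑ m, u m (Function.update (fun _ => z) i j m) := by
            rw [← Finset.add_sum_erase _ _ (Finset.mem_univ i),
                Function.update_self]
            have : ∑ m ∈ Finset.univ.erase i,
                u m (Function.update (fun _ => z) i j m) = 0 := by
              refine Finset.sum_eq_zero fun m hm => ?_
              rw [Function.update_of_ne (Finset.ne_of_mem_erase hm)]
              exact hfirst m
            rw [this, add_zero]
        _ ≤ _ := h
    have hlb : -u i j ≤ ((k : ℝ) - 1) / (k : ℝ) ^ 2 * ‖x z - x j‖ ^ 2 := by
      have h := hu (Function.update (fun _ => j) i z)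
      rw [motCost_update hk0, norm_sub_rev] at h
      calc -u i j = ∑ m, u m (Function.update (fun _ => j) i z m) := by
            rw [← Finset.add_sum_erase _ _ (Finset.mem_univ i),
                Function.update_self, hfirst i, zero_add]
            have : ∑ m ∈ Finset.univ.erase i,
                u m (Function.update (fun _ => j) i z m)
                = ∑ m ∈ Finset.univ.erase i, u m j :=
              Finset.sum_congr rfl fun m hm => by
                rw [Function.update_of_ne (Finset.ne_of_mem_erase hm)]
            rw [this, Finset.sum_erase_eq_sub (Finset.mem_univ i), hsum j,
              zero_sub]
        _ ≤ _ := h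
    exact abs_le.mpr ⟨by linarith, hub⟩
  refine ⟨key, fun i => ?_⟩
  have hc : (0:ℝ) ≤ ((k : ℝ) - 1) / (k : ℝ) ^ 2 := by
    have h2 : (2:ℝ) ≤ (k:ℝ) := by exact_mod_cast hk
    have : (0:ℝ) < (k:ℝ)^2 := by positivity
    have : (0:ℝ) ≤ (k:ℝ) - 1 := by linarith
    positivity
  have h1 : ∑ j, u i j ^ 2 ≤
      (((k : ℝ) - 1) / (k : ℝ) ^ 2) ^ 2 * ∑ j, ‖x z - x j‖ ^ 4 := by
    rw [Finset.mul_sum]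
    refine Finset.sum_le_sum fun j _ => ?_
    have := key i j
    calc u i j ^ 2 = |u i j| ^ 2 := (sq_abs _).symm
      _ ≤ (((k : ℝ) - 1) / (k : ℝ) ^ 2 * ‖x z - x j‖ ^ 2) ^ 2 :=
          pow_le_pow_left₀ (abs_nonneg _) this 2
      _ = (((k : ℝ) - 1) / (k : ℝ) ^ 2) ^ 2 * ‖x z - x j‖ ^ 4 := by ring
  calc Real.sqrt (∑ j, u i j ^ 2)
      ≤ Real.sqrt ((((k : ℝ) - 1) / (k : ℝ) ^ 2) ^ 2 * ∑ j, ‖x z - x j‖ ^ 4) :=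
        Real.sqrt_le_sqrt h1
    _ = ((k : ℝ) - 1) / (k : ℝ) ^ 2 * Real.sqrt (∑ j, ‖x z - x j‖ ^ 4) := by
        rw [Real.sqrt_mul (sq_nonneg _), Real.sqrt_sq hc]
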